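/- Let u be the infinite sequence obtained as the limit of the words A_n (A_1 = 10111, A_{n+1} = A_n O_n A_n I_n A_n with O_n all 0's and I_n all 1's of length 5^n), and let B be a finite word of length 5^n that is neither O_n nor I_n. Then for every k ≥ 10n+1, the frequency of occurrences of B as a subword of A_k satisfies (1/5^k)·#{0 ≤ i ≤ 5^k − 1 : A_k[i, i+5^n−1] = B} ≤ (4/5)^{k−10n}; in particular this frequency tends to 0 as k → ∞. -/

import Mathlib

/-- The words `A_n` over the alphabet `{0,1}` (`false = 0`, `true = 1`):
`A₁ = 10111` and `A_{n+1} = A_n O_n A_n I_n A_n`, where `O_n` (resp. `I_n`) is the constant-`0`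
(resp. constant-`1`) word of the same length as `A_n`. (`Aword 0` is a dummy value.) -/
def Aword : ℕ → List Bool
  | 0 => []
  | 1 => [true, false, true, true, true]
  | n + 2 =>
      Aword (n + 1) ++ List.replicate (Aword (n + 1)).length false ++ Aword (n + 1)
        ++ List.replicate (Aword (n + 1)).length true ++ Aword (n + 1)

/-- The one-sided infinite sequence `u` obtained as the limit of the words `A_n`
(each `A_n` is a prefix of `A_{n+1}`, and `A_{i+1}` has length `5^{i+1} > i`). -/
def useq : ℕ → Bool := fun i => (Aword (i + 1)).getD i false

lemma Aword_length : ∀ k, 1 ≤ k → (Aword k).length = 5 ^ k := by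
  intro k
  induction k with
  | zero => omega
  | succ m ih =>
    intro _
    match m, ih with
    | 0, _ => simp [Aword]
    | m + 1, ih =>
      have h := ih (by omega)
      simp [Aword, h, pow_succ]
      ring

lemma Aword_succ_eq (k : ℕ) (hk : 1 ≤ k) :
    Aword (k + 1) = Aword k ++ (List.replicate (5 ^ k) false ++ (Aword k ++
      (List.replicate (5 ^ k) true ++ Aword k))) := by
  obtain ⟨m, rfl⟩ : ∃ m, k = m + 1 := ⟨k - 1, by omega⟩
  simp [Aword, Aword_length (m+1) (by omega), List.append_assoc]

lemma Aword_prefix_le {k m : ℕ} (h : k ≤ m) : Aword k <+: Aword m := by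
  induction m with
  | zero => cases Nat.le_zero.mp h; exact List.prefix_refl _
  | succ m ih =>
    rcases Nat.lt_or_ge k (m+1) with h' | h'
    · refine (ih (by omega)).trans ?_
      match m with
      | 0 => exact ⟨Aword 1, by simp [Aword]⟩
      | m + 1 => exact ⟨_, (Aword_succ_eq (m+1) (by omega)).symm⟩
    · have : k = m + 1 := by omega
      subst this; exact List.prefix_refl _

lemma prefix_getD {l l' : List Bool} (h : l <+: l') {i : ℕ} (hi : i < l.length) :
    l'.getD i false = l.getD i false := by
  obtain ⟨t, rfl⟩ := h
  exact List.getD_append _ _ _ _ hi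

lemma useq_eq {k i : ℕ} (hk : 1 ≤ k) (hi : i < 5 ^ k) :
    useq i = (Aword k).getD i false := by
  have hik : i < (Aword k).length := by rw [Aword_length k hk]; exact hi
  have h1 : i < (Aword (i+1)).length := by
    rw [Aword_length (i+1) (by omega)]
    calc i < 5 ^ i := Nat.lt_pow_self (by norm_num)
    _ ≤ 5 ^ (i+1) := Nat.pow_le_pow_right (by norm_num) (by omega)
  rcases Nat.le_total k (i+1) with h | h
  · rw [useq, prefix_getD (Aword_prefix_le h) hik]
  · rw [useq, ← prefix_getD (Aword_prefix_le h) h1]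

lemma pow5succ (k : ℕ) : 5 ^ (k + 1) = 5 * 5 ^ k := by rw [pow_succ]; ring

lemma useq_O {k : ℕ} (hk : 1 ≤ k) {t : ℕ} (ht : t < 5 ^ k) : useq (5 ^ k + t) = false := by
  have h5 : 5 ^ k + t < 5 ^ (k+1) := by rw [pow5succ]; omega
  rw [useq_eq (by omega) h5, Aword_succ_eq k hk,
    List.getD_append_right _ _ _ _ (by rw [Aword_length k hk]; omega)]
  rw [Aword_length k hk]
  have : 5 ^ k + t - 5 ^ k = t := by omega
  rw [this, List.getD_append _ _ _ _ (by simpa using ht)]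
  simp [List.getD_eq_getElem?_getD]

lemma useq_copy2 {k : ℕ} (hk : 1 ≤ k) {t : ℕ} (ht : t < 5 ^ k) :
    useq (2 * 5 ^ k + t) = useq t := by
  have h5 : 2 * 5 ^ k + t < 5 ^ (k+1) := by rw [pow5succ]; omega
  rw [useq_eq (by omega) h5, Aword_succ_eq k hk,
    List.getD_append_right _ _ _ _ (by rw [Aword_length k hk]; omega),
    List.getD_append_right _ _ _ _ (by simp [Aword_length k hk]; omega)]
  simp only [Aword_length k hk, List.length_replicate]
  have : 2 * 5 ^ k + t - 5 ^ k - 5 ^ k = t := by omega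
  rw [this, List.getD_append _ _ _ _ (by rw [Aword_length k hk]; omega), ← useq_eq hk ht]

lemma useq_I {k : ℕ} (hk : 1 ≤ k) {t : ℕ} (ht : t < 5 ^ k) : useq (3 * 5 ^ k + t) = true := by
  have h5 : 3 * 5 ^ k + t < 5 ^ (k+1) := by rw [pow5succ]; omega
  rw [useq_eq (by omega) h5, Aword_succ_eq k hk,
    List.getD_append_right _ _ _ _ (by rw [Aword_length k hk]; omega),
    List.getD_append_right _ _ _ _ (by simp [Aword_length k hk]; omega),
    List.getD_append_right _ _ _ _ (by simp [Aword_length k hk]; omega)]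
  simp only [Aword_length k hk, List.length_replicate]
  have : 3 * 5 ^ k + t - 5 ^ k - 5 ^ k - 5 ^ k = t := by omega
  rw [this, List.getD_append _ _ _ _ (by simpa using ht)]
  simp [List.getD_eq_getElem?_getD, ht]

lemma useq_copy4 {k : ℕ} (hk : 1 ≤ k) {t : ℕ} (ht : t < 5 ^ k) :
    useq (4 * 5 ^ k + t) = useq t := by
  have h5 : 4 * 5 ^ k + t < 5 ^ (k+1) := by rw [pow5succ]; omega
  rw [useq_eq (by omega) h5, Aword_succ_eq k hk,
    List.getD_append_right _ _ _ _ (by rw [Aword_length k hk]; omega),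
    List.getD_append_right _ _ _ _ (by simp [Aword_length k hk]; omega),
    List.getD_append_right _ _ _ _ (by simp [Aword_length k hk]; omega),
    List.getD_append_right _ _ _ _ (by simp [Aword_length k hk]; omega)]
  simp only [Aword_length k hk, List.length_replicate]
  have : 4 * 5 ^ k + t - 5 ^ k - 5 ^ k - 5 ^ k - 5 ^ k = t := by omega
  rw [this, ← useq_eq hk ht]

lemma useq_copy4' {k : ℕ} (hk : 1 ≤ k) {s : ℕ} (hs : s < 2 * 5 ^ k) :
    useq (4 * 5 ^ k + s) = useq s := by
  rcases Nat.lt_or_ge s (5 ^ k) with h | h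
  · exact useq_copy4 hk h
  · have ht : s - 5 ^ k < 5 ^ k := by omega
    have e1 : 4 * 5 ^ k + s = 5 ^ (k+1) + (s - 5 ^ k) := by rw [pow5succ]; omega
    have e2 : s = 5 ^ k + (s - 5 ^ k) := by omega
    rw [e1, useq_O (by omega) (by rw [pow5succ]; omega)]
    rw [e2, useq_O hk ht]

def occ (n : ℕ) (B : List Bool) (k : ℕ) : ℕ :=
  ((Finset.range (5 ^ k)).filter (fun i => ∀ j < 5 ^ n, useq (i + j) = B.getD j false)).card

lemma card_filter_Ico (a L : ℕ) (P : ℕ → Prop) [DecidablePred P] :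
    ((Finset.Ico a (a + L)).filter P).card = ((Finset.range L).filter fun t => P (a + t)).card := by
  symm
  apply Finset.card_bij (fun t _ => a + t)
  · intro x hx
    simp only [Finset.mem_filter, Finset.mem_range] at hx
    simp only [Finset.mem_filter, Finset.mem_Ico]
    exact ⟨⟨by omega, by omega⟩, hx.2⟩
  · intro x1 h1 x2 h2 h; omega
  · intro s hs
    simp only [Finset.mem_filter, Finset.mem_Ico] at hs
    refine ⟨s - a, ?_, by omega⟩
    simp only [Finset.mem_filter, Finset.mem_range]
    constructor
    · omega
    · have : a + (s - a) = s := by omega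
      rw [this]; exact hs.2

lemma card_filter_range5 (L : ℕ) (P : ℕ → Prop) [DecidablePred P] :
    ((Finset.range (5 * L)).filter P).card ≤
      ((Finset.range L).filter fun t => P t).card
      + ((Finset.range L).filter fun t => P (L + t)).card
      + ((Finset.range L).filter fun t => P (2 * L + t)).card
      + ((Finset.range L).filter fun t => P (3 * L + t)).card
      + ((Finset.range L).filter fun t => P (4 * L + t)).card := by
  have hsplit : Finset.range (5 * L) =
      (((Finset.Ico 0 (0 + L) ∪ Finset.Ico L (L + L)) ∪ Finset.Ico (2 * L) (2 * L + L))
        ∪ Finset.Ico (3 * L) (3 * L + L)) ∪ Finset.Ico (4 * L) (4 * L + L) := by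
    ext x
    simp only [Finset.mem_union, Finset.mem_Ico, Finset.mem_range]
    omega
  rw [hsplit]
  simp only [Finset.filter_union]
  refine le_trans (Finset.card_union_le _ _) ?_
  gcongr ?_ + ?_
  · refine le_trans (Finset.card_union_le _ _) ?_
    gcongr ?_ + ?_
    · refine le_trans (Finset.card_union_le _ _) ?_
      gcongr ?_ + ?_
      · refine le_trans (Finset.card_union_le _ _) ?_
        gcongr ?_ + ?_
        · rw [card_filter_Ico]; simp
        · rw [card_filter_Ico]
      · rw [card_filter_Ico]
    · rw [card_filter_Ico]
  · rw [card_filter_Ico]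

lemma boundary_card (L F : ℕ) (Q : ℕ → Prop) [DecidablePred Q] :
    (((Finset.range L).filter fun t => L < t + F ∧ Q t)).card ≤ F := by
  calc (((Finset.range L).filter fun t => L < t + F ∧ Q t)).card
      ≤ (Finset.Ico (L - F) L).card := by
        apply Finset.card_le_card
        intro t ht
        simp only [Finset.mem_filter, Finset.mem_range] at ht
        simp only [Finset.mem_Ico]
        omega
    _ ≤ F := by rw [Nat.card_Ico]; omega

lemma occ_rec (n : ℕ) (hn : 1 ≤ n) (B : List Bool) (hB : B.length = 5 ^ n)
    (hB0 : B ≠ List.replicate (5 ^ n) false) (hB1 : B ≠ List.replicate (5 ^ n) true)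
    (k : ℕ) (hk : n ≤ k) :
    occ n B (k + 1) ≤ 3 * occ n B k + 3 * 5 ^ n := by
  have hk1 : 1 ≤ k := le_trans hn hk
  set P : ℕ → Prop := fun i => ∀ j < 5 ^ n, useq (i + j) = B.getD j false with hP
  have h5 : 5 ^ (k + 1) = 5 * 5 ^ k := by rw [pow_succ]; ring
  have hnk : 5 ^ n ≤ 5 ^ k := Nat.pow_le_pow_right (by norm_num) hk
  set L : ℕ := 5 ^ k with hL
  -- B is not all-false / all-true as getD
  have hBf : ¬ (∀ j < 5 ^ n, B.getD j false = false) := by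
    intro h
    apply hB0
    apply List.ext_getElem (by simp [hB])
    intro j hj hj'
    have hj5 : j < 5 ^ n := by omega
    have := h j hj5
    rw [List.getD_eq_getElem?_getD, List.getElem?_eq_getElem hj] at this
    simpa using this
  have hBt : ¬ (∀ j < 5 ^ n, B.getD j false = true) := by
    intro h
    apply hB1
    apply List.ext_getElem (by simp [hB])
    intro j hj hj'
    have hj5 : j < 5 ^ n := by omega
    have := h j hj5
    rw [List.getD_eq_getElem?_getD, List.getElem?_eq_getElem hj] at this
    simpa using this
  have key := card_filter_range5 L P
  rw [occ, h5]
  refine le_trans key ?_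
  have hc0 : ((Finset.range L).filter fun t => P t).card = occ n B k := rfl
  -- block 1
  have hc1 : ((Finset.range L).filter fun t => P (L + t)).card ≤ 5 ^ n := by
    refine le_trans (le_of_eq ?_) (boundary_card L (5 ^ n) (fun t => P (L + t)))
    congr 1
    apply Finset.filter_congr
    intro t ht
    simp only [Finset.mem_range] at ht
    constructor
    · intro hPt
      refine ⟨?_, hPt⟩
      by_contra hb
      push_neg at hb
      apply hBf
      intro j hj
      have := hPt j hj
      rw [add_assoc] at this
      rw [← this, useq_O hk1 (t := t + j) (by omega)]
    · exact fun h => h.2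
  -- block 2
  have hc2 : ((Finset.range L).filter fun t => P (2 * L + t)).card ≤ occ n B k + 5 ^ n := by
    have hsub : ((Finset.range L).filter fun t => P (2 * L + t)) ⊆
        ((Finset.range L).filter fun t => P t)
          ∪ ((Finset.range L).filter fun t => L < t + 5 ^ n ∧ P (2 * L + t)) := by
      intro t ht
      simp only [Finset.mem_filter, Finset.mem_range] at ht
      rcases Nat.lt_or_ge L (t + 5 ^ n) with h | h
      · refine Finset.mem_union_right _ ?_
        simp only [Finset.mem_filter, Finset.mem_range]
        exact ⟨ht.1, h, ht.2⟩
      · refine Finset.mem_union_left _ ?_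
        simp only [Finset.mem_filter, Finset.mem_range]
        refine ⟨ht.1, ?_⟩
        intro j hj
        have := ht.2 j hj
        rw [add_assoc, useq_copy2 hk1 (t := t + j) (by omega)] at this
        exact this
    refine le_trans (Finset.card_le_card hsub) ?_
    refine le_trans (Finset.card_union_le _ _) ?_
    exact add_le_add (le_of_eq hc0) (boundary_card L (5 ^ n) _)
  -- block 3
  have hc3 : ((Finset.range L).filter fun t => P (3 * L + t)).card ≤ 5 ^ n := by
    refine le_trans (le_of_eq ?_) (boundary_card L (5 ^ n) (fun t => P (3 * L + t)))
    congr 1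
    apply Finset.filter_congr
    intro t ht
    simp only [Finset.mem_range] at ht
    constructor
    · intro hPt
      refine ⟨?_, hPt⟩
      by_contra hb
      push_neg at hb
      apply hBt
      intro j hj
      have := hPt j hj
      rw [add_assoc] at this
      rw [← this, useq_I hk1 (t := t + j) (by omega)]
    · exact fun h => h.2
  -- block 4
  have hc4 : ((Finset.range L).filter fun t => P (4 * L + t)).card ≤ occ n B k := by
    rw [← hc0]
    apply Finset.card_le_card
    intro t ht
    simp only [Finset.mem_filter, Finset.mem_range] at ht ⊢
    refine ⟨ht.1, ?_⟩
    intro j hj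
    have := ht.2 j hj
    rw [add_assoc, useq_copy4' hk1 (s := t + j) (by omega)] at this
    exact this
  omega

lemma occ_growth (n : ℕ) (hn : 1 ≤ n) (B : List Bool) (hB : B.length = 5 ^ n)
    (hB0 : B ≠ List.replicate (5 ^ n) false) (hB1 : B ≠ List.replicate (5 ^ n) true) :
    ∀ k, n ≤ k → occ n B k + 2 * 5 ^ n ≤ 3 ^ (k + 1 - n) * 5 ^ n := by
  intro k hk
  induction k, hk using Nat.le_induction with
  | base =>
    have h1 : occ n B n ≤ 5 ^ n := by
      rw [occ]
      exact le_trans (Finset.card_filter_le _ _) (by rw [Finset.card_range])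
    have h2 : n + 1 - n = 1 := by omega
    rw [h2, pow_one]
    omega
  | succ k hk ih =>
    have hrec := occ_rec n hn B hB hB0 hB1 k hk
    have h2 : k + 1 + 1 - n = (k + 1 - n) + 1 := by omega
    rw [h2, pow_succ, mul_comm (3 ^ (k + 1 - n)) 3, mul_assoc]
    have := Nat.mul_le_mul_left 3 ih
    omega

lemma numeric1 : ∀ n, 1 ≤ n → 3 * 3 ^ (9 * n) ≤ 5 ^ (9 * n) := by
  intro n hn
  induction n with
  | zero => omega
  | succ m ih =>
    match m, ih with
    | 0, _ => norm_num
    | m + 1, ih =>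
      have h := ih (by omega)
      have e1 : 9 * (m + 2) = 9 * (m + 1) + 9 := by ring
      rw [e1, pow_add, pow_add, ← mul_assoc]
      calc 3 * 3 ^ (9 * (m + 1)) * 3 ^ 9 ≤ 5 ^ (9 * (m + 1)) * 3 ^ 9 :=
        Nat.mul_le_mul_right _ h
      _ ≤ 5 ^ (9 * (m + 1)) * 5 ^ 9 := Nat.mul_le_mul_left _ (by norm_num)

lemma numeric2 (n k : ℕ) (hn : 1 ≤ n) (hk : 10 * n + 1 ≤ k) :
    3 ^ (k + 1 - n) * 5 ^ n ≤ 4 ^ (k - 10 * n) * 5 ^ (10 * n) := by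
  set e := k - 10 * n with he
  have he1 : 1 ≤ e := by omega
  have hke : k + 1 - n = 9 * n + e + 1 := by omega
  rw [hke]
  have h1 : 3 ^ (9 * n + e + 1) = 3 * 3 ^ (9 * n) * 3 ^ e := by
    rw [pow_add, pow_add]; ring
  have h2 : (5:ℕ) ^ (10 * n) = 5 ^ (9 * n) * 5 ^ n := by
    rw [← pow_add]; congr 1; ring
  rw [h1, h2]
  have h3 : (3:ℕ) ^ e ≤ 4 ^ e := Nat.pow_le_pow_left (by norm_num) e
  calc 3 * 3 ^ (9 * n) * 3 ^ e * 5 ^ n ≤ 5 ^ (9 * n) * 4 ^ e * 5 ^ n := by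
        exact Nat.mul_le_mul_right _ (Nat.mul_le_mul (numeric1 n hn) h3)
    _ = 4 ^ e * (5 ^ (9 * n) * 5 ^ n) := by ring

lemma occ_le (n : ℕ) (hn : 1 ≤ n) (B : List Bool) (hB : B.length = 5 ^ n)
    (hB0 : B ≠ List.replicate (5 ^ n) false) (hB1 : B ≠ List.replicate (5 ^ n) true)
    (k : ℕ) (hk : 10 * n + 1 ≤ k) :
    occ n B k ≤ 4 ^ (k - 10 * n) * 5 ^ (10 * n) := by
  have h1 := occ_growth n hn B hB hB0 hB1 k (by omega)
  have h2 := numeric2 n k hn hk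
  omega

lemma ncard_eq_occ (n : ℕ) (B : List Bool) (k : ℕ) :
    ({i : ℕ | i < 5 ^ k ∧ ∀ j < 5 ^ n, useq (i + j) = B.getD j false}).ncard = occ n B k := by
  rw [occ, ← Set.ncard_coe_finset]
  congr 1
  ext i
  simp only [Finset.coe_filter, Finset.mem_range, Set.mem_setOf_eq]

/-- If `B` is a word of length `5^n` (with `n ≥ 1`) different from the constant words `O_n`
and `I_n`, then for every `k ≥ 10n + 1` the frequency of occurrences of `B` among the windows
of `u` starting at positions `0 ≤ i ≤ 5^k - 1` (i.e. in `A_k`, continued into `u`) is at most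
`(4/5)^{k - 10n}`; in particular this frequency tends to `0` as `k → ∞`. -/
theorem subword_frequency_bound (n : ℕ) (hn : 1 ≤ n) (B : List Bool)
    (hB : B.length = 5 ^ n)
    (hB0 : B ≠ List.replicate (5 ^ n) false) (hB1 : B ≠ List.replicate (5 ^ n) true) :
    (∀ k : ℕ, 10 * n + 1 ≤ k →
      (({i : ℕ | i < 5 ^ k ∧ ∀ j < 5 ^ n, useq (i + j) = B.getD j false}).ncard : ℝ) / 5 ^ k
        ≤ (4 / 5 : ℝ) ^ (k - 10 * n)) ∧
    Filter.Tendsto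
      (fun k : ℕ =>
        (({i : ℕ | i < 5 ^ k ∧ ∀ j < 5 ^ n, useq (i + j) = B.getD j false}).ncard : ℝ) / 5 ^ k)
      Filter.atTop (nhds 0) := by
  have hpart1 : ∀ k : ℕ, 10 * n + 1 ≤ k →
      (({i : ℕ | i < 5 ^ k ∧ ∀ j < 5 ^ n, useq (i + j) = B.getD j false}).ncard : ℝ) / 5 ^ k
        ≤ (4 / 5 : ℝ) ^ (k - 10 * n) := by
    intro k hk
    rw [ncard_eq_occ]
    rw [div_le_iff₀ (by positivity)]
    have hocc := occ_le n hn B hB hB0 hB1 k hk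
    have hsplit : (5 : ℝ) ^ k = 5 ^ (k - 10 * n) * 5 ^ (10 * n) := by
      rw [← pow_add]
      congr 1
      omega
    calc (occ n B k : ℝ) ≤ ((4 ^ (k - 10 * n) * 5 ^ (10 * n) : ℕ) : ℝ) := by
          exact_mod_cast hocc
      _ = (4 : ℝ) ^ (k - 10 * n) * 5 ^ (10 * n) := by push_cast; ring
      _ = (4 / 5 : ℝ) ^ (k - 10 * n) * 5 ^ k := by
          rw [hsplit, div_pow, ← mul_assoc, div_mul_cancel₀]
          positivity
  refine ⟨hpart1, ?_⟩
  apply squeeze_zero' (g := fun k : ℕ => (4 / 5 : ℝ) ^ (k - 10 * n))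
  · filter_upwards with k
    positivity
  · filter_upwards [Filter.eventually_atTop.mpr ⟨10 * n + 1, fun k hk => hpart1 k hk⟩] with k hk
    exact hk
  · exact (tendsto_pow_atTop_nhds_zero_of_lt_one (by norm_num) (by norm_num)).comp
      (Filter.tendsto_sub_atTop_nat (10 * n))
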